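/- arXiv:2005.03102 — 2 statements merged into one kernel-verified Lean document; each statement's English description precedes it below -/
import Mathlib

section
/- Let Σ be a finite alphabet of size σ ≥ 2, and let b, k, n be positive integers with 2 ≤ b < k. If k ≥ ⌈log_σ n + log_σ(b−1)⌉ + 1, then |C_DB(n,b,k)| ≥ (σ−1)·σ^{n−1}; in particular the redundancy n − log_σ |C_DB(n,b,k)| is at most one symbol. -/
open List (Vector)

/-- The window `s[i, i+k-1]` (0-based start `i`, length `k`). -/
def window {A : Type*} (s : List A) (i k : ℕ) : List A := (s.drop i).take k

/-- `s` is a `(b,k)`-constrained de Bruijn sequence: any two windows of length `k`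
starting at distinct positions at distance at most `b-1` are distinct. -/
def IsCDB {A : Type*} (s : List A) (b k : ℕ) : Prop :=
  ∀ i j : ℕ, i < j → j - i ≤ b - 1 → j + k ≤ s.length → window s i k ≠ window s j k

section Aux

variable {A : Type*}

lemma window_length {s : List A} {i k : ℕ} (h : i + k ≤ s.length) :
    (window s i k).length = k := by
  simp [window]; omega

lemma window_getElem {s : List A} {i k t : ℕ} (h : i + k ≤ s.length) (ht : t < k) :
    (window s i k)[t]'(by rw [window_length h]; exact ht) = s[i+t]'(by omega) := by
  unfold window
  rw [List.getElem_take, List.getElem_drop]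

lemma window_eq_pointwise {s : List A} {i j k : ℕ} (hi : i + k ≤ s.length)
    (hj : j + k ≤ s.length) (h : window s i k = window s j k) {t : ℕ} (ht : t < k) :
    s[i+t]'(by omega) = s[j+t]'(by omega) := by
  rw [← window_getElem hi ht, ← window_getElem hj ht]
  exact List.getElem_of_eq h _

lemma eq_of_window_eq {s t : List A} {n i j k : ℕ} (hs : s.length = n) (ht : t.length = n)
    (hij : i < j) (hjk : j + k ≤ n)
    (hsw : window s i k = window s j k) (htw : window t i k = window t j k)
    (h1 : s.take j = t.take j) (h2 : s.drop (j+k) = t.drop (j+k)) : s = t := by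
  have key : ∀ m, ∀ (hm : m < s.length) (hm' : m < t.length), s[m] = t[m] := by
    intro m
    induction m using Nat.strong_induction_on with
    | _ m IH =>
      intro hm hm'
      rcases lt_or_ge m j with hmj | hmj
      · have e1 : (s.take j)[m]'(by simp; omega) = (t.take j)[m]'(by simp; omega) :=
          List.getElem_of_eq h1 _
        rwa [List.getElem_take, List.getElem_take] at e1
      rcases lt_or_ge m (j+k) with hmk | hmk
      · have htk : m - j < k := by omega
        have e1 : s[i + (m-j)]'(by omega) = s[j + (m-j)]'(by omega) :=
          window_eq_pointwise (by omega) (by omega) hsw htk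
        have e2 : t[i + (m-j)]'(by omega) = t[j + (m-j)]'(by omega) :=
          window_eq_pointwise (by omega) (by omega) htw htk
        have e3 : s[i + (m-j)]'(by omega) = t[i + (m-j)]'(by omega) :=
          IH (i + (m-j)) (by omega) (by omega) (by omega)
        have hjm : j + (m - j) = m := by omega
        simp only [hjm] at e1 e2
        rw [← e1, ← e2]
        exact e3
      · have e1 : (s.drop (j+k))[m-(j+k)]'(by simp; omega)
            = (t.drop (j+k))[m-(j+k)]'(by simp; omega) :=
          List.getElem_of_eq h2 _
        rw [List.getElem_drop, List.getElem_drop] at e1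
        have hjm : j + k + (m - (j+k)) = m := by omega
        simpa only [hjm] using e1
  exact List.ext_getElem (by omega) key

end Aux

theorem stmt8 {A : Type*} [Fintype A] (hA : 2 ≤ Fintype.card A) (b k n : ℕ)
    (hb : 2 ≤ b) (hbk : b < k) (hn : 1 ≤ n)
    (hkceil :
      ⌈Real.logb (Fintype.card A) (n : ℝ) + Real.logb (Fintype.card A) ((b : ℝ) - 1)⌉ + 1
        ≤ (k : ℤ)) :
    (((Fintype.card A - 1) * Fintype.card A ^ (n - 1) : ℕ) : ℕ)
        ≤ {s : List A | s.length = n ∧ IsCDB s b k}.ncard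
    ∧ (n : ℝ) - Real.logb (Fintype.card A)
        (({s : List A | s.length = n ∧ IsCDB s b k}.ncard : ℝ)) ≤ 1 := by
  classical
  set σ := Fintype.card A with hσdef
  have hσ1 : 1 < σ := hA
  -- identify the set with a finset of vectors
  have hset : {s : List A | s.length = n ∧ IsCDB s b k}
      = List.Vector.toList '' {v : List.Vector A n | IsCDB v.toList b k} := by
    ext s
    simp only [Set.mem_setOf_eq, Set.mem_image]
    constructor
    · rintro ⟨hl, hc⟩; exact ⟨⟨s, hl⟩, hc, rfl⟩
    · rintro ⟨v, hc, rfl⟩; exact ⟨v.toList_length, hc⟩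
  set Good := Finset.univ.filter (fun v : List.Vector A n => IsCDB v.toList b k) with hGood
  have hncard : {s : List A | s.length = n ∧ IsCDB s b k}.ncard = Good.card := by
    rw [hset, Set.ncard_image_of_injective _ List.Vector.toList_injective,
      ← Set.ncard_coe_finset]
    congr 1
    ext v; simp [hGood]
  -- main counting bound
  have main : (σ - 1) * σ ^ (n - 1) ≤ Good.card := by
    rcases le_or_gt n k with hnk | hkn
    · -- vacuous case: every sequence is constrained
      have hGu : Good = Finset.univ := by
        ext v
        simp only [hGood, Finset.mem_filter, Finset.mem_univ, true_and, iff_true]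
        intro i j hij hd hlen
        rw [v.toList_length] at hlen
        omega
      have : Good.card = σ ^ n := by rw [hGu, Finset.card_univ, card_vector]
      rw [this]
      calc (σ - 1) * σ ^ (n - 1) ≤ σ * σ ^ (n - 1) :=
            Nat.mul_le_mul_right _ (by omega)
        _ = σ ^ n := by
            rw [← pow_succ']
            congr 1
            omega
    · -- counting case
      set Bad := Finset.univ.filter (fun v : List.Vector A n => ¬ IsCDB v.toList b k) with hBad
      have hBadip : ∀ i p : ℕ,
          (Finset.univ.filter (fun v : List.Vector A n => i + p + k ≤ n ∧ 0 < p ∧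
            window v.toList i k = window v.toList (i+p) k)).card ≤ σ ^ (n - k) := by
        intro i p
        by_cases hle : i + p + k ≤ n ∧ 0 < p
        · obtain ⟨hle, hp⟩ := hle
          have hcardU : (Finset.univ : Finset (List.Vector A (n-k))).card = σ ^ (n - k) := by
            rw [Finset.card_univ]; exact card_vector _
          set f : List.Vector A n → List.Vector A (n-k) := fun v =>
            ⟨v.toList.take (i+p) ++ v.toList.drop (i+p+k), by
              simp [v.toList_length]; omega⟩ with hf
          have hmaps : ∀ v ∈ (Finset.univ.filter (fun v : List.Vector A n => i + p + k ≤ n ∧ 0 < p ∧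
              window v.toList i k = window v.toList (i+p) k)),
              f v ∈ (Finset.univ : Finset (List.Vector A (n-k))) := fun _ _ => Finset.mem_univ _
          refine le_trans (Finset.card_le_card_of_injOn f hmaps ?_) ?_
          · intro v hv w hw hvw
            simp only [Finset.coe_filter, Set.mem_setOf_eq, Finset.mem_univ, true_and] at hv hw
            obtain ⟨-, -, hveq⟩ := hv
            obtain ⟨-, -, hweq⟩ := hw
            have hlists : v.toList.take (i+p) ++ v.toList.drop (i+p+k)
                = w.toList.take (i+p) ++ w.toList.drop (i+p+k) :=
              congrArg Subtype.val (by exact hvw)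
            have hlen : (v.toList.take (i+p)).length = (w.toList.take (i+p)).length := by
              simp [v.toList_length, w.toList_length]
            obtain ⟨h1, h2⟩ := List.append_inj hlists hlen
            apply List.Vector.toList_injective
            exact eq_of_window_eq v.toList_length w.toList_length
              (show i < i + p by omega) (show i + p + k ≤ n from hle)
              (by simpa using hveq) (by simpa using hweq) h1 h2
          · exact le_of_eq hcardU
        · have : (Finset.univ.filter (fun v : List.Vector A n => i + p + k ≤ n ∧ 0 < p ∧
              window v.toList i k = window v.toList (i+p) k)) = ∅ := by
            ext v
            simp only [Finset.mem_filter, Finset.mem_univ, true_and, Finset.notMem_empty,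
              iff_false]
            tauto
          simp [this]
      have hsub : Bad ⊆ (Finset.range n ×ˢ Finset.Icc 1 (b-1)).biUnion
          (fun q => Finset.univ.filter (fun v : List.Vector A n => q.1 + q.2 + k ≤ n ∧ 0 < q.2 ∧
            window v.toList q.1 k = window v.toList (q.1+q.2) k)) := by
        intro v hv
        simp only [hBad, Finset.mem_filter, Finset.mem_univ, true_and] at hv
        rw [IsCDB] at hv
        push_neg at hv
        obtain ⟨i, j, hij, hdist, hlen, heq⟩ := hv
        rw [v.toList_length] at hlen
        refine Finset.mem_biUnion.mpr ⟨(i, j - i), ?_, ?_⟩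
        · simp only [Finset.mem_product, Finset.mem_range, Finset.mem_Icc]
          constructor <;> omega
        · simp only [Finset.mem_filter, Finset.mem_univ, true_and]
          have hiji : i + (j - i) = j := by omega
          rw [hiji]
          exact ⟨by omega, by omega, heq⟩
      have hBadcard : Bad.card ≤ n * (b-1) * σ ^ (n-k) := by
        calc Bad.card ≤ _ := Finset.card_le_card hsub
          _ ≤ ∑ q ∈ Finset.range n ×ˢ Finset.Icc 1 (b-1),
              (Finset.univ.filter (fun v : List.Vector A n => q.1 + q.2 + k ≤ n ∧ 0 < q.2 ∧
                window v.toList q.1 k = window v.toList (q.1+q.2) k)).card :=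
            Finset.card_biUnion_le
          _ ≤ ∑ _q ∈ Finset.range n ×ˢ Finset.Icc 1 (b-1), σ ^ (n-k) :=
            Finset.sum_le_sum (fun q _ => hBadip q.1 q.2)
          _ = (n * (b-1)) * σ ^ (n-k) := by
            rw [Finset.sum_const, smul_eq_mul, Finset.card_product, Finset.card_range,
              Nat.card_Icc]
            congr 2 <;> omega
      -- arithmetic from the ceiling hypothesis
      have hkey : n * (b-1) ≤ σ ^ (k-1) := by
        have hb1 : (1:ℝ) < (σ:ℝ) := by exact_mod_cast hσ1
        have hbn : (1:ℝ) ≤ (b:ℝ) - 1 := by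
          have : (2:ℝ) ≤ (b:ℝ) := by exact_mod_cast hb
          linarith
        have hnn : (1:ℝ) ≤ (n:ℝ) := by exact_mod_cast hn
        have hx : (0:ℝ) < (n:ℝ) * ((b:ℝ) - 1) := by nlinarith
        have hlogb : Real.logb σ ((n:ℝ) * ((b:ℝ) - 1)) ≤ (k:ℝ) - 1 := by
          rw [Real.logb_mul (by positivity) (by linarith)]
          have h1 : Real.logb σ (n:ℝ) + Real.logb σ ((b:ℝ) - 1)
              ≤ ((⌈Real.logb σ (n:ℝ) + Real.logb σ ((b:ℝ) - 1)⌉ : ℤ) : ℝ) := Int.le_ceil _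
          have h2 : ((⌈Real.logb σ (n:ℝ) + Real.logb σ ((b:ℝ) - 1)⌉ : ℤ) : ℝ)
              ≤ (k:ℝ) - 1 := by
            have : (⌈Real.logb σ (n:ℝ) + Real.logb σ ((b:ℝ) - 1)⌉ : ℤ) ≤ (k:ℤ) - 1 := by
              omega
            calc ((⌈Real.logb σ (n:ℝ) + Real.logb σ ((b:ℝ) - 1)⌉ : ℤ) : ℝ)
                ≤ (((k:ℤ) - 1 : ℤ) : ℝ) := by exact_mod_cast this
              _ = (k:ℝ) - 1 := by push_cast; ring
          linarith
        have hle := (Real.logb_le_iff_le_rpow hb1 hx).mp hlogb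
        have hexp : ((σ:ℝ)) ^ ((k:ℝ) - 1) = ((σ ^ (k-1) : ℕ) : ℝ) := by
          rw [show ((k:ℝ) - 1) = (((k-1 : ℕ)) : ℝ) by
            push_cast [Nat.cast_sub (show 1 ≤ k by omega)]; ring]
          rw [Real.rpow_natCast]
          push_cast
          ring
        rw [hexp] at hle
        have hcast : ((n * (b-1) : ℕ) : ℝ) = (n:ℝ) * ((b:ℝ) - 1) := by
          rw [Nat.cast_mul, Nat.cast_sub (show 1 ≤ b by omega), Nat.cast_one]
        have hfin : ((n * (b-1) : ℕ) : ℝ) ≤ ((σ ^ (k-1) : ℕ) : ℝ) := by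
          rw [hcast]; exact hle
        exact Nat.cast_le.mp hfin
      have h1 : Bad.card ≤ σ ^ (n-1) := by
        calc Bad.card ≤ n * (b-1) * σ ^ (n-k) := hBadcard
          _ ≤ σ ^ (k-1) * σ ^ (n-k) := Nat.mul_le_mul_right _ hkey
          _ = σ ^ (n-1) := by rw [← pow_add]; congr 1; omega
      have hsum : Good.card + Bad.card = σ ^ n := by
        rw [hGood, hBad, Finset.card_filter_add_card_filter_not,
          Finset.card_univ, card_vector]
      have e2 : (σ-1) * σ ^ (n-1) + σ ^ (n-1) = σ ^ n := by
        have hσs : σ - 1 + 1 = σ := by omega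
        calc (σ-1) * σ ^ (n-1) + σ ^ (n-1) = (σ - 1 + 1) * σ ^ (n-1) := by ring
          _ = σ * σ ^ (n-1) := by rw [hσs]
          _ = σ ^ n := by rw [← pow_succ']; congr 1; omega
      omega
  have hpow_le : σ ^ (n-1) ≤ Good.card :=
    le_trans (Nat.le_mul_of_pos_left _ (by omega)) main
  constructor
  · rw [hncard]; exact_mod_cast main
  · have hσR : (1:ℝ) < (σ:ℝ) := by exact_mod_cast hσ1
    have hposR : (0:ℝ) < ((σ:ℝ)) ^ (n-1) := by positivity
    have hcardR : ((σ:ℝ)) ^ (n-1) ≤ (({s : List A | s.length = n ∧ IsCDB s b k}.ncard : ℕ) : ℝ) := by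
      rw [hncard]
      exact_mod_cast hpow_le
    have hlog1 : Real.logb σ (((σ:ℝ)) ^ (n-1)) = ((n-1 : ℕ) : ℝ) := by
      rw [Real.logb_pow, Real.logb_self_eq_one (by linarith)]
      ring
    have hmono : Real.logb σ (((σ:ℝ)) ^ (n-1))
        ≤ Real.logb σ (({s : List A | s.length = n ∧ IsCDB s b k}.ncard : ℝ)) :=
      Real.logb_le_logb_of_le hσR hposR hcardR
    rw [hlog1] at hmono
    have : ((n-1 : ℕ) : ℝ) = (n:ℝ) - 1 := by
      push_cast [Nat.cast_sub hn]; ring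
    rw [this] at hmono
    linarith
end

section
/- Let Σ be a finite alphabet, let b ≥ 3, and let s ∈ Σ^n be a (b,1)-constrained de Bruijn sequence. For a multiplicity function m : {1,…,n} → ℕ, let s(m) denote the word obtained by writing, in order, m(i) copies of s_i for i = 1,…,n (so positions with m(i) = 0 are deleted and positions with m(i) ≥ 2 suffer sticky insertions). Suppose m, m' : {1,…,n} → ℕ are such that in each of them the set of positions with multiplicity 0 contains at most b−2 consecutive integers. If s(m) = s(m'), then m = m'. In particular, the locations of all deletions and all sticky insertions are uniquely determined from s and the received word. -/
/-- The received word obtained by reading the symbol at (0-based) position `i` of `s`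
exactly `m i` times, in order (`m i = 0` is a deletion, `m i ≥ 2` sticky insertions). -/
def expand {A : Type*} (s : List A) (m : ℕ → ℕ) : List A :=
  (((List.range s.length).zip s).map fun p => List.replicate (m p.1) p.2).flatten

def expF {A : Type*} (s : List A) (n : ℕ) (m : ℕ → ℕ) : List A :=
  (((List.range' n s.length).zip s).map fun p => List.replicate (m p.1) p.2).flatten

lemma expand_eq_expF {A : Type*} (s : List A) (m : ℕ → ℕ) : expand s m = expF s 0 m := by
  rw [expand, expF, List.range_eq_range']

lemma expF_shift {A : Type*} (s : List A) : ∀ (n : ℕ) (m : ℕ → ℕ),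
    expF s (n+1) m = expF s n (fun i => m (i+1)) := by
  induction s with
  | nil => intro n m; rfl
  | cons a s ih =>
    intro n m
    have := ih (n+1) m
    simp only [expF, List.length_cons, List.range'_succ, List.zip_cons_cons, List.map_cons,
      List.flatten_cons] at this ⊢
    rw [this]

lemma expand_cons {A : Type*} (a : A) (s : List A) (m : ℕ → ℕ) :
    expand (a :: s) m = List.replicate (m 0) a ++ expand s (fun i => m (i+1)) := by
  rw [expand_eq_expF, expand_eq_expF]
  have := expF_shift s 0 m
  simp only [expF, List.length_cons, List.range'_succ, List.zip_cons_cons, List.map_cons,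
    List.flatten_cons] at this ⊢
  rw [this]

lemma expand_nil {A : Type*} (m : ℕ → ℕ) : expand ([] : List A) m = [] := by simp [expand]

lemma window_one {A : Type*} (s : List A) (i : ℕ) (h : i < s.length) :
    window s i 1 = [s[i]] := by
  rw [window, List.drop_eq_getElem_cons h]
  rfl

/-- If the expansion is nonempty, its head is the symbol at the first position with
nonzero multiplicity. -/
lemma expand_head {A : Type*} : ∀ (s : List A) (μ : ℕ → ℕ) (a : A) (rest : List A),
    expand s μ = a :: rest →
    ∃ j, ∃ h : j < s.length, (∀ t, t < j → μ t = 0) ∧ s[j] = a := by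
  intro s
  induction s with
  | nil => intro μ a rest h; simp [expand_nil] at h
  | cons x s ih =>
    intro μ a rest h
    rw [expand_cons] at h
    rcases Nat.eq_zero_or_pos (μ 0) with h0 | h0
    · rw [h0] at h
      simp at h
      obtain ⟨j, hj, hz, hja⟩ := ih _ _ _ h
      refine ⟨j + 1, by simpa using Nat.succ_lt_succ hj, ?_, by simpa using hja⟩
      intro t ht
      match t with
      | 0 => exact h0
      | t + 1 => exact hz t (by omega)
    · have : List.replicate (μ 0) x = x :: List.replicate (μ 0 - 1) x := by
        rw [← List.replicate_succ]; congr 1; omega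
      rw [this] at h
      simp at h
      exact ⟨0, by simp, fun t ht => by omega, by simpa using h.1⟩

lemma cross_absurd {A : Type*} (b : ℕ) (hb : 3 ≤ b) (a : A) (s : List A)
    (hs : IsCDB (a :: s) b 1) (m : ℕ → ℕ)
    (hm : ¬ ∃ j : ℕ, j + (b - 1) ≤ (a :: s).length ∧ ∀ t : ℕ, t < b - 1 → m (j + t) = 0)
    (rest : List A)
    (h : expand s (fun i => m (i + 1)) = a :: rest) : False := by
  obtain ⟨j, hj, hz, hja⟩ := expand_head s _ a rest h
  -- j ≤ b - 2
  have hjb : j < b - 1 := by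
    by_contra hcon
    push_neg at hcon
    refine hm ⟨j + 2 - b, ?_, ?_⟩
    · simp; omega
    · intro t ht
      have h1 : 1 ≤ j + 2 - b + t := by omega
      have h2 : (j + 2 - b + t) - 1 < j := by omega
      have := hz ((j + 2 - b + t) - 1) h2
      simpa [show (j + 2 - b + t) - 1 + 1 = j + 2 - b + t by omega] using this
  have := hs 0 (j + 1) (by omega) (by omega) (by simp; omega)
  apply this
  rw [window_one _ 0 (by simp), window_one _ (j+1) (by simp; omega)]
  simp [hja]

lemma main_aux {A : Type*} (b : ℕ) (hb : 3 ≤ b) : ∀ (s : List A), IsCDB s b 1 →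
    ∀ (m m' : ℕ → ℕ),
    (¬ ∃ j : ℕ, j + (b - 1) ≤ s.length ∧ ∀ t : ℕ, t < b - 1 → m (j + t) = 0) →
    (¬ ∃ j : ℕ, j + (b - 1) ≤ s.length ∧ ∀ t : ℕ, t < b - 1 → m' (j + t) = 0) →
    expand s m = expand s m' →
    ∀ i : ℕ, i < s.length → m i = m' i := by
  intro s
  induction s with
  | nil => intro _ _ _ _ _ _ i hi; simp at hi
  | cons a s ih =>
    intro hs m m' hm hm' heq i hi
    rw [expand_cons, expand_cons] at heq
    -- transported hypotheses for the tail
    have hs' : IsCDB s b 1 := by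
      intro i' j' hij hd hlen hww
      refine hs (i' + 1) (j' + 1) (by omega) (by omega) (by simp; omega) ?_
      simpa [window, List.drop_succ_cons] using hww
    have hmt : ∀ (μ : ℕ → ℕ),
        (¬ ∃ j : ℕ, j + (b - 1) ≤ (a :: s).length ∧ ∀ t : ℕ, t < b - 1 → μ (j + t) = 0) →
        ¬ ∃ j : ℕ, j + (b - 1) ≤ s.length ∧ ∀ t : ℕ, t < b - 1 → μ (j + t + 1) = 0 := by
      intro μ hμ ⟨j, h1, h2⟩
      exact hμ ⟨j + 1, by simp; omega, fun t ht => by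
        have := h2 t ht; simpa [show j + 1 + t = j + t + 1 by omega] using this⟩
    rcases lt_trichotomy (m 0) (m' 0) with hlt | heq0 | hlt
    · exfalso
      have hrep : List.replicate (m' 0) a
          = List.replicate (m 0) a ++ List.replicate (m' 0 - m 0) a := by
        rw [← List.replicate_add]; congr 1; omega
      rw [hrep, List.append_assoc] at heq
      have heq2 := List.append_cancel_left heq
      have hpos : m' 0 - m 0 ≠ 0 := by omega
      rw [show List.replicate (m' 0 - m 0) a = a :: List.replicate (m' 0 - m 0 - 1) a by
        rw [← List.replicate_succ]; congr 1; omega] at heq2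
      exact cross_absurd b hb a s hs m hm _ heq2
    · match i with
      | 0 => exact heq0
      | i + 1 =>
        rw [heq0] at heq
        have heq2 := List.append_cancel_left heq
        have := ih hs' (fun i => m (i+1)) (fun i => m' (i+1)) (hmt m hm) (hmt m' hm') heq2
          i (by simpa using hi)
        simpa using this
    · exfalso
      have hrep : List.replicate (m 0) a
          = List.replicate (m' 0) a ++ List.replicate (m 0 - m' 0) a := by
        rw [← List.replicate_add]; congr 1; omega
      rw [hrep, List.append_assoc] at heq
      have heq2 := (List.append_cancel_left heq).symm
      rw [show List.replicate (m 0 - m' 0) a = a :: List.replicate (m 0 - m' 0 - 1) a by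
        rw [← List.replicate_succ]; congr 1; omega] at heq2
      exact cross_absurd b hb a s hs m' hm' _ heq2

theorem stmt16 {A : Type*} (b : ℕ) (hb : 3 ≤ b) (s : List A) (hs : IsCDB s b 1)
    (m m' : ℕ → ℕ)
    -- the set of deleted positions contains at most b-2 consecutive integers,
    -- i.e. there is no run of b-1 consecutive positions all with multiplicity 0
    (hm : ¬ ∃ j : ℕ, j + (b - 1) ≤ s.length ∧ ∀ t : ℕ, t < b - 1 → m (j + t) = 0)
    (hm' : ¬ ∃ j : ℕ, j + (b - 1) ≤ s.length ∧ ∀ t : ℕ, t < b - 1 → m' (j + t) = 0)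
    (heq : expand s m = expand s m') :
    ∀ i : ℕ, i < s.length → m i = m' i :=
  main_aux b hb s hs m m' hm hm' heq
end
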